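/- Odd-even merge correctness: if a list of length n = 2^t (t >= 1) consists of two sorted halves each of length n/2, then the odd-even merge procedure (recursively merging the even-indexed and odd-indexed subsequences, then applying compare-and-swap to each pair (a_i, a_{i+1}) for odd i) produces a sorted list that is a permutation of the input. -/

import Mathlib

/-- The even-indexed subsequence `a₀, a₂, a₄, …` of a list. -/
def evensOf {α : Type*} : List α → List α
  | [] => []
  | [a] => [a]
  | a :: _ :: l => a :: evensOf l

/-- The odd-indexed subsequence `a₁, a₃, a₅, …` of a list. -/
def oddsOf {α : Type*} : List α → List α
  | [] => []
  | [_] => []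
  | _ :: b :: l => b :: oddsOf l

/-- Interleave two lists: `interleave [e₀,e₁,…] [o₀,o₁,…] = [e₀,o₀,e₁,o₁,…]`. -/
def interleave {α : Type*} : List α → List α → List α
  | [], l' => l'
  | a :: l, l' => a :: interleave l' l
termination_by l l' => l.length + l'.length
decreasing_by simp; omega

/-- Apply a compare-and-swap gate to each consecutive pair
`(a₀,a₁), (a₂,a₃), …` of a list. -/
def cswapPairs {α : Type*} [LinearOrder α] : List α → List α
  | a :: b :: l => min a b :: max a b :: cswapPairs l
  | l => l

/-- Batcher's odd-even merge on a list of length `2^t`: recursively merge the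
even-indexed and odd-indexed subsequences, interleave the results, and apply
compare-and-swap to each pair `(aᵢ, aᵢ₊₁)` for odd `i`. -/
def oemerge {α : Type*} [LinearOrder α] : ℕ → List α → List α
  | 0, l => l
  | 1, l => cswapPairs l
  | t + 2, l =>
    match interleave (oemerge (t + 1) (evensOf l)) (oemerge (t + 1) (oddsOf l)) with
    | [] => []
    | a :: rest => a :: cswapPairs rest

set_option linter.unusedSectionVars false

namespace OEMAux

theorem evensOf_sublist {α : Type*} : ∀ l : List α, List.Sublist (evensOf l) l
  | [] => List.Sublist.refl _
  | [a] => List.Sublist.refl _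
  | a :: b :: l => by
      simpa [evensOf] using ((evensOf_sublist l).cons b).cons₂ a

theorem oddsOf_sublist {α : Type*} : ∀ l : List α, List.Sublist (oddsOf l) l
  | [] => List.Sublist.refl _
  | [a] => by simp [oddsOf]
  | a :: b :: l => by
      simpa [oddsOf] using ((oddsOf_sublist l).cons₂ b).cons a

theorem evensOf_length {α : Type*} : ∀ l : List α, (evensOf l).length = (l.length + 1) / 2
  | [] => by simp [evensOf]
  | [a] => by simp [evensOf]
  | a :: b :: l => by simp [evensOf, evensOf_length l]; omega

theorem oddsOf_length {α : Type*} : ∀ l : List α, (oddsOf l).length = l.length / 2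
  | [] => by simp [oddsOf]
  | [a] => by simp [oddsOf]
  | a :: b :: l => by simp [oddsOf, oddsOf_length l]; omega

theorem evensOf_append {α : Type*} : ∀ (A : List α), A.length % 2 = 0 → ∀ B, evensOf (A ++ B) = evensOf A ++ evensOf B
  | [], _, B => rfl
  | [a], h, B => by simp at h
  | a :: b :: A, h, B => by
      simp at h
      simp [evensOf, evensOf_append A (by omega) B]

theorem oddsOf_append {α : Type*} : ∀ (A : List α), A.length % 2 = 0 → ∀ B, oddsOf (A ++ B) = oddsOf A ++ oddsOf B
  | [], _, B => rfl
  | [a], h, B => by simp at h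
  | a :: b :: A, h, B => by
      simp at h
      simp [oddsOf, oddsOf_append A (by omega) B]

theorem interleave_eo {α : Type*} : ∀ l : List α, interleave (evensOf l) (oddsOf l) = l
  | [] => by simp [evensOf, oddsOf, interleave]
  | [a] => by simp [evensOf, oddsOf, interleave]
  | a :: b :: l => by simp [evensOf, oddsOf, interleave, interleave_eo l]

theorem interleave_perm {α : Type*} : ∀ l l' : List α, (interleave l l').Perm (l ++ l')
  | [], l' => by simp [interleave]
  | a :: l, l' => by
      simp only [interleave, List.cons_append]
      exact ((interleave_perm l' l).trans List.perm_append_comm).cons a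
termination_by l l' => l.length + l'.length
decreasing_by simp; omega

variable {α : Type*} [LinearOrder α]

theorem cswapPairs_perm : ∀ l : List α, (cswapPairs l).Perm l
  | [] => List.Perm.refl _
  | [a] => List.Perm.refl _
  | a :: b :: l => by
      have h : ([min a b, max a b] : List α).Perm [a, b] := by
        rcases le_total a b with h | h <;> simp [min_eq_left, max_eq_right, min_eq_right, max_eq_left, h, List.Perm.swap]
      simpa [cswapPairs] using (List.Perm.append h (cswapPairs_perm l))

theorem count_ge_of_get (u : List α) (hu : u.Pairwise (· ≤ ·)) (i : ℕ) (a : α)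
    (h : u[i]? = some a) : i + 1 ≤ u.countP (· ≤ a) := by
  have hi : i < u.length := by
    by_contra hc
    simp [List.getElem?_eq_none (le_of_not_gt hc)] at h
  have ha : u[i] = a := by
    have := List.getElem?_eq_getElem hi
    rw [this] at h; exact Option.some.inj h
  have hcount : (u.take (i+1)).countP (· ≤ a) = (u.take (i+1)).length := by
    apply List.countP_eq_length.2
    intro y hy
    obtain ⟨j, hj, hyj⟩ := List.mem_iff_getElem.1 hy
    have hj2 : j < i + 1 ∧ j < u.length := by simpa using hj
    rw [List.getElem_take] at hyj
    have : u[j]'hj2.2 ≤ u[i] := by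
      rcases lt_or_eq_of_le (Nat.lt_succ_iff.1 hj2.1) with h' | h'
      · exact (List.pairwise_iff_getElem.1 hu) j i hj2.2 hi h'
      · subst h'; exact le_refl _
    simp [← hyj, ha ▸ this]
  calc i + 1 = (u.take (i+1)).length := by simp; omega
    _ = (u.take (i+1)).countP (· ≤ a) := hcount.symm
    _ ≤ u.countP (· ≤ a) := by
        conv_rhs => rw [← List.take_append_drop (i+1) u]
        rw [List.countP_append]; omega

theorem count_le_of_get (v : List α) (hv : v.Pairwise (· ≤ ·)) (i : ℕ) (a b : α)
    (h : v[i]? = some b) (hab : a < b) : v.countP (· ≤ a) ≤ i := by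
  have hi : i < v.length := by
    by_contra hc
    simp [List.getElem?_eq_none (le_of_not_gt hc)] at h
  have hb : v[i] = b := by
    have := List.getElem?_eq_getElem hi
    rw [this] at h; exact Option.some.inj h
  have hz : (v.drop i).countP (· ≤ a) = 0 := by
    apply List.countP_eq_zero.2
    intro y hy
    obtain ⟨j, hj, hyj⟩ := List.mem_iff_getElem.1 hy
    have hj2 : i + j < v.length := by have := List.length_drop (i := i) (l := v); omega
    rw [List.getElem_drop] at hyj
    have : v[i] ≤ v[i+j]'hj2 := by
      rcases Nat.eq_or_lt_of_le (Nat.le_add_right i j) with h' | h'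
      · have hj0 : j = 0 := by omega
        subst hj0
        simp
      · exact (List.pairwise_iff_getElem.1 hv) i (i+j) hi hj2 h'
    rw [hb, hyj] at this
    simp only [decide_eq_true_eq]
    exact fun hya => absurd (lt_of_lt_of_le hab (le_trans this hya)) (lt_irrefl a)
  calc v.countP (· ≤ a) = (v.take i).countP (· ≤ a) + (v.drop i).countP (· ≤ a) := by
        rw [← List.countP_append, List.take_append_drop]
    _ ≤ (v.take i).length + 0 := by rw [hz]; exact Nat.add_le_add List.countP_le_length (le_refl 0)
    _ ≤ i := by simp

theorem pointwise_of_count (u v : List α) (hu : u.Pairwise (· ≤ ·)) (hv : v.Pairwise (· ≤ ·)) (k : ℕ)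
    (hc : ∀ x : α, u.countP (· ≤ x) ≤ v.countP (· ≤ x) + k) :
    ∀ i a b, u[i+k]? = some a → v[i]? = some b → b ≤ a := by
  intro i a b ha hb
  by_contra hn
  push_neg at hn
  have h1 := count_ge_of_get u hu (i+k) a ha
  have h2 := count_le_of_get v hv i a b hb hn
  have := hc a
  omega

theorem counts_eo (x : α) : ∀ A : List α, A.Pairwise (· ≤ ·) →
    (oddsOf A).countP (· ≤ x) ≤ (evensOf A).countP (· ≤ x) ∧
    (evensOf A).countP (· ≤ x) ≤ (oddsOf A).countP (· ≤ x) + 1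
  | [], _ => by simp [evensOf, oddsOf]
  | [a], _ => by simp [evensOf, oddsOf, List.countP_cons]; split <;> omega
  | a :: b :: A, h => by
    have hab : a ≤ b := (List.pairwise_cons.1 h).1 b (by simp)
    have hA : A.Pairwise (· ≤ ·) := ((List.pairwise_cons.1 (List.pairwise_cons.1 h).2)).2
    have ih := counts_eo x A hA
    simp only [evensOf, oddsOf, List.countP_cons]
    by_cases h1 : a ≤ x <;> by_cases h2 : b ≤ x
    · simp [h1, h2]; omega
    · have hz1 : (evensOf A).countP (· ≤ x) = 0 := by
        apply List.countP_eq_zero.2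
        intro y hy
        have hby : b ≤ y := (List.pairwise_cons.1 (List.pairwise_cons.1 h).2).1 y
          ((evensOf_sublist A).subset hy)
        simp only [decide_eq_true_eq]
        exact fun hyx => h2 (le_trans hby hyx)
      have hz2 : (oddsOf A).countP (· ≤ x) = 0 := by
        apply List.countP_eq_zero.2
        intro y hy
        have hby : b ≤ y := (List.pairwise_cons.1 (List.pairwise_cons.1 h).2).1 y
          ((oddsOf_sublist A).subset hy)
        simp only [decide_eq_true_eq]
        exact fun hyx => h2 (le_trans hby hyx)
      simp [h1, h2, hz1, hz2]
    · exact absurd (le_trans hab h2) h1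
    · simp [h1, h2]; omega

theorem stageH : ∀ o e : List α, o.length = e.length + 1 →
    o.Pairwise (· ≤ ·) → e.Pairwise (· ≤ ·) →
    (∀ i a b, e[i]? = some a → o[i+1]? = some b → a ≤ b) →
    (∀ i a b, o[i]? = some a → e[i+1]? = some b → a ≤ b) →
    ∀ c : α, (∀ x, o[0]? = some x → c ≤ x) → (∀ x, e[0]? = some x → c ≤ x) →
    (c :: cswapPairs (interleave o e)).Pairwise (· ≤ ·)
  | [], e, hl, _, _, _, _, c, _, _ => by simp at hl
  | [b], [], _, _, _, _, _, c, hco, hce => by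
      simp [interleave, cswapPairs]
      exact hco b rfl
  | _ :: _ :: _, [], hl, _, _, _, _, _, _, _ => by simp at hl
  | b :: o', a :: e', hl, ho, he, heo, hoe, c, hco, hce => by
      simp only [List.length_cons] at hl
      have hl' : o'.length = e'.length + 1 := by omega
      have ho' : o'.Pairwise (· ≤ ·) := (List.pairwise_cons.1 ho).2
      have he' : e'.Pairwise (· ≤ ·) := (List.pairwise_cons.1 he).2
      have heo' : ∀ i a b, e'[i]? = some a → o'[i+1]? = some b → a ≤ b := by
        intro i x y hx hy
        exact heo (i+1) x y (by simpa using hx) (by simpa using hy)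
      have hoe' : ∀ i a b, o'[i]? = some a → e'[i+1]? = some b → a ≤ b := by
        intro i x y hx hy
        exact hoe (i+1) x y (by simpa using hx) (by simpa using hy)
      have hmax_o' : ∀ x, o'[0]? = some x → max b a ≤ x := by
        intro x hx
        have hbx : b ≤ x := (List.pairwise_cons.1 ho).1 x (List.mem_of_getElem? hx)
        have hax : a ≤ x := heo 0 a x (by simp) (by simpa using hx)
        exact max_le hbx hax
      have hmax_e' : ∀ x, e'[0]? = some x → max b a ≤ x := by
        intro x hx
        have hax : a ≤ x := (List.pairwise_cons.1 he).1 x (List.mem_of_getElem? hx)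
        have hbx : b ≤ x := hoe 0 b x (by simp) (by simpa using hx)
        exact max_le hbx hax
      have ih := stageH o' e' hl' ho' he' heo' hoe' (max b a) hmax_o' hmax_e'
      have hstep : interleave (b :: o') (a :: e') = b :: a :: interleave o' e' := by
        simp [interleave]
      rw [hstep]
      have hcsw : cswapPairs (b :: a :: interleave o' e') =
          min b a :: max b a :: cswapPairs (interleave o' e') := rfl
      rw [hcsw]
      rw [List.pairwise_cons]
      constructor
      · intro y hy
        rcases List.pairwise_cons.1 ih with ⟨hmaxle, _⟩
        have hcb : c ≤ b := hco b (by simp)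
        have hca : c ≤ a := hce a (by simp)
        simp only [List.mem_cons] at hy
        rcases hy with rfl | rfl | hy
        · exact le_min hcb hca
        · exact le_trans (le_min hcb hca) min_le_max
        · exact le_trans (le_trans (le_min hcb hca) min_le_max) (hmaxle y hy)
      · rw [List.pairwise_cons]
        exact ⟨fun y hy => by
          rcases List.pairwise_cons.1 ih with ⟨hmaxle, _⟩
          simp only [List.mem_cons] at hy
          rcases hy with rfl | hy
          · exact min_le_max
          · exact le_trans min_le_max (hmaxle y hy), ih⟩

theorem main : ∀ (t : ℕ), 1 ≤ t → ∀ l : List α, l.length = 2 ^ t →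
    (l.take (2 ^ (t - 1))).Pairwise (· ≤ ·) → (l.drop (2 ^ (t - 1))).Pairwise (· ≤ ·) →
    (oemerge t l).Pairwise (· ≤ ·) ∧ (oemerge t l).Perm l
  | 0, ht, _, _, _, _ => absurd ht (by omega)
  | 1, _, l, hlen, h1, h2 => by
      match l, hlen with
      | [a, b], _ =>
        refine ⟨?_, by simpa [oemerge] using cswapPairs_perm [a, b]⟩
        show ([min a b, max a b] : List α).Pairwise (· ≤ ·)
        simp [List.pairwise_cons, min_le_max]
  | (t+2), _, l, hlen, h1, h2 => by
      -- setup
      have hp1 : (2:ℕ) ^ (t+1) = 2 * 2 ^ t := by ring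
      have hp2 : (2:ℕ) ^ (t+2) = 2 * 2 ^ (t+1) := by ring
      have hpt : 1 ≤ (2:ℕ) ^ t := Nat.one_le_two_pow
      set A := l.take (2 ^ (t+1)) with hAdef
      set B := l.drop (2 ^ (t+1)) with hBdef
      have hAB : A ++ B = l := List.take_append_drop _ _
      have hAlen : A.length = 2 ^ (t+1) := by
        simp [hAdef, hlen]; omega
      have hBlen : B.length = 2 ^ (t+1) := by
        simp [hBdef, hlen]; omega
      have hAsort : A.Pairwise (· ≤ ·) := by simpa using h1
      have hBsort : B.Pairwise (· ≤ ·) := by simpa using h2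
      have hAeven : A.length % 2 = 0 := by omega
      -- even and odd subsequences
      have hEsplit : evensOf l = evensOf A ++ evensOf B := by
        rw [← hAB]; exact evensOf_append A hAeven B
      have hOsplit : oddsOf l = oddsOf A ++ oddsOf B := by
        rw [← hAB]; exact oddsOf_append A hAeven B
      have hEAlen : (evensOf A).length = 2 ^ t := by
        rw [evensOf_length, hAlen]; omega
      have hEBlen : (evensOf B).length = 2 ^ t := by
        rw [evensOf_length, hBlen]; omega
      have hOAlen : (oddsOf A).length = 2 ^ t := by
        rw [oddsOf_length, hAlen]; omega
      have hOBlen : (oddsOf B).length = 2 ^ t := by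
        rw [oddsOf_length, hBlen]; omega
      have hEAsort : (evensOf A).Pairwise (· ≤ ·) := hAsort.sublist (evensOf_sublist A)
      have hEBsort : (evensOf B).Pairwise (· ≤ ·) := hBsort.sublist (evensOf_sublist B)
      have hOAsort : (oddsOf A).Pairwise (· ≤ ·) := hAsort.sublist (oddsOf_sublist A)
      have hOBsort : (oddsOf B).Pairwise (· ≤ ·) := hBsort.sublist (oddsOf_sublist B)
      -- recursive calls
      have hElen : (evensOf l).length = 2 ^ (t+1) := by
        rw [hEsplit, List.length_append, hEAlen, hEBlen]; omega
      have hOlen : (oddsOf l).length = 2 ^ (t+1) := by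
        rw [hOsplit, List.length_append, hOAlen, hOBlen]; omega
      have hEtake : (evensOf l).take (2 ^ t) = evensOf A := by
        rw [hEsplit, ← hEAlen]; exact List.take_left
      have hEdrop : (evensOf l).drop (2 ^ t) = evensOf B := by
        rw [hEsplit, ← hEAlen]; exact List.drop_left
      have hOtake : (oddsOf l).take (2 ^ t) = oddsOf A := by
        rw [hOsplit, ← hOAlen]; exact List.take_left
      have hOdrop : (oddsOf l).drop (2 ^ t) = oddsOf B := by
        rw [hOsplit, ← hOAlen]; exact List.drop_left
      obtain ⟨hEsort, hEperm⟩ := main (t+1) (by omega) (evensOf l) hElen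
        (by simpa [hEtake] using hEAsort) (by simpa [hEdrop] using hEBsort)
      obtain ⟨hOsort, hOperm⟩ := main (t+1) (by omega) (oddsOf l) hOlen
        (by simpa [hOtake] using hOAsort) (by simpa [hOdrop] using hOBsort)
      set E := oemerge (t+1) (evensOf l) with hEdef
      set O := oemerge (t+1) (oddsOf l) with hOdef
      -- counting conditions
      have hcount : ∀ x : α, O.countP (· ≤ x) ≤ E.countP (· ≤ x) ∧
          E.countP (· ≤ x) ≤ O.countP (· ≤ x) + 2 := by
        intro x
        have hcE : E.countP (· ≤ x) = (evensOf A).countP (· ≤ x) + (evensOf B).countP (· ≤ x) := by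
          rw [hEperm.countP_eq, hEsplit, List.countP_append]
        have hcO : O.countP (· ≤ x) = (oddsOf A).countP (· ≤ x) + (oddsOf B).countP (· ≤ x) := by
          rw [hOperm.countP_eq, hOsplit, List.countP_append]
        have hA2 := counts_eo x A hAsort
        have hB2 := counts_eo x B hBsort
        omega
      have hEO := pointwise_of_count O E hOsort hEsort 0
        (fun x => by have := (hcount x).1; omega)
      have hOE2 := pointwise_of_count E O hEsort hOsort 2 (fun x => (hcount x).2)
      -- E is nonempty
      have hElen' : E.length = 2 ^ (t+1) := by rw [hEperm.length_eq, hElen]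
      have hOlen' : O.length = 2 ^ (t+1) := by rw [hOperm.length_eq, hOlen]
      have hne : E ≠ [] := by
        intro h
        rw [h, List.length_nil] at hElen'
        have : 1 ≤ (2:ℕ) ^ (t+1) := Nat.one_le_two_pow
        omega
      obtain ⟨e0, Etail, hEeq⟩ := List.exists_cons_of_ne_nil hne
      -- the result
      have hres : oemerge (t+2) l = e0 :: cswapPairs (interleave O Etail) := by
        show (match interleave (oemerge (t+1) (evensOf l)) (oemerge (t+1) (oddsOf l)) with
          | [] => []
          | a :: rest => a :: cswapPairs rest) = _
        rw [← hEdef, ← hOdef, hEeq]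
        simp [interleave]
      -- sortedness via stageH
      have hlen2 : O.length = Etail.length + 1 := by
        rw [hOlen']
        have := hElen'
        rw [hEeq] at this
        simp at this
        omega
      have hEtailsort : Etail.Pairwise (· ≤ ·) := by
        rw [hEeq] at hEsort
        exact (List.pairwise_cons.1 hEsort).2
      have heo : ∀ i a b, Etail[i]? = some a → O[i+1]? = some b → a ≤ b := by
        intro i x y hx hy
        exact hEO (i+1) y x hy (by rw [hEeq]; simpa using hx)
      have hoe : ∀ i a b, O[i]? = some a → Etail[i+1]? = some b → a ≤ b := by
        intro i x y hx hy
        exact hOE2 i y x (by rw [hEeq]; simpa using hy) hx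
      have hco : ∀ x, O[0]? = some x → e0 ≤ x := by
        intro x hx
        exact hEO 0 x e0 hx (by rw [hEeq]; simp)
      have hce : ∀ x, Etail[0]? = some x → e0 ≤ x := by
        intro x hx
        rw [hEeq] at hEsort
        exact (List.pairwise_cons.1 hEsort).1 x (List.mem_of_getElem? hx)
      have hsorted := stageH O Etail hlen2 hOsort hEtailsort heo hoe e0 hco hce
      rw [hres]
      refine ⟨hsorted, ?_⟩
      -- permutation
      have p1 : (e0 :: cswapPairs (interleave O Etail)).Perm (e0 :: interleave O Etail) :=
        (cswapPairs_perm _).cons e0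
      have p2 : (e0 :: interleave O Etail) = interleave E O := by
        rw [hEeq]; simp [interleave]
      have p3 : (interleave E O).Perm (E ++ O) := interleave_perm E O
      have p4 : (E ++ O).Perm (evensOf l ++ oddsOf l) := hEperm.append hOperm
      have p5 : (evensOf l ++ oddsOf l).Perm l := by
        have := interleave_perm (evensOf l) (oddsOf l)
        rw [interleave_eo l] at this
        exact this.symm
      exact p1.trans (p2 ▸ (p3.trans (p4.trans p5)))

end OEMAux

theorem oemerge_correct {α : Type*} [LinearOrder α] (t : ℕ) (ht : 1 ≤ t)
    (l : List α) (hlen : l.length = 2 ^ t)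
    (h1 : (l.take (2 ^ (t - 1))).Pairwise (· ≤ ·))
    (h2 : (l.drop (2 ^ (t - 1))).Pairwise (· ≤ ·)) :
    (oemerge t l).Pairwise (· ≤ ·) ∧ (oemerge t l).Perm l :=
  OEMAux.main t ht l hlen h1 h2
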